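/- There exists a ℂ-algebra homomorphism A_q(N) → A_q(N,2) sending x^i_j to Σ_s x^i_s·y^s_j for all i,j; equivalently, the entries of the matrix product XY (where X = (x^i_j) and Y = (y^i_j)) satisfy the defining relations of the reflection equation algebra A_q(N). -/

import Mathlib

noncomputable section
open scoped BigOperators

namespace QREA

/-- The entry `R^{ik}_{jl}` of the R-matrix of quantum `SL_N`. -/
def Rc (q : ℂ) {N : ℕ} (i k j l : Fin N) : ℂ :=
  if i = j ∧ k = l ∧ i = k then q
  else if i = j ∧ k = l then 1
  else if j < i ∧ i = l ∧ j = k then q - q⁻¹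
  else 0

/-- The entry `R̂^{ik}_{jl} = R^{ki}_{jl}`. -/
def Rh (q : ℂ) {N : ℕ} (i k j l : Fin N) : ℂ := Rc q k i j l

/-- The free algebra on generators `x^i_j`. -/
abbrev F (N : ℕ) := FreeAlgebra ℂ (Fin N × Fin N)

/-- The generator `x^i_j` of the free algebra. -/
def g {N : ℕ} (i j : Fin N) : F N := FreeAlgebra.ι ℂ (i, j)

/-- The defining relations of the reflection equation algebra `A_q(N)`:
for all `i j k l`,
`Σ_{s,t,a,b} R̂^{ib}_{st}·R̂^{sa}_{jl}·x^k_b·x^t_a = Σ_{s,t,a,b} R̂^{ik}_{sa}·R̂^{st}_{jb}·x^a_t·x^b_l`. -/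
inductive Rel (q : ℂ) (N : ℕ) : F N → F N → Prop
  | rea (i j k l : Fin N) : Rel q N
      (∑ s : Fin N, ∑ t : Fin N, ∑ a : Fin N, ∑ b : Fin N,
        (Rh q i b s t * Rh q s a j l) • (g k b * g t a))
      (∑ s : Fin N, ∑ t : Fin N, ∑ a : Fin N, ∑ b : Fin N,
        (Rh q i k s a * Rh q s t j b) • (g a t * g b l))

/-- The reflection equation algebra `A_q(N)`. -/
abbrev A (q : ℂ) (N : ℕ) := RingQuot (Rel q N)

/-- The generator `x^i_j` of `A_q(N)`. -/
def X (q : ℂ) {N : ℕ} (i j : Fin N) : A q N := RingQuot.mkAlgHom ℂ (Rel q N) (g i j)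

end QREA

namespace QREA

/-- The R-matrix as an `N²×N²` matrix: the entry in row `(i,k)`, column `(j,l)` is `R^{ik}_{jl}`. -/
def RM (q : ℂ) (N : ℕ) : Matrix (Fin N × Fin N) (Fin N × Fin N) ℂ :=
  Matrix.of fun p r => Rc q p.1 p.2 r.1 r.2

/-- The operation `A ↦ A^{t₂}`, `(A^{t₂})^{ik}_{jl} = A^{il}_{jk}`. -/
def t2 {N : ℕ} (M : Matrix (Fin N × Fin N) (Fin N × Fin N) ℂ) :
    Matrix (Fin N × Fin N) (Fin N × Fin N) ℂ :=
  Matrix.of fun p r => M (p.1, r.2) (r.1, p.2)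

/-- The matrix `R̃`, defined by `R̃^{t₂} = (R^{t₂})⁻¹`. -/
def Rtil (q : ℂ) (N : ℕ) : Matrix (Fin N × Fin N) (Fin N × Fin N) ℂ :=
  t2 ((t2 (RM q N))⁻¹)

/-- The free algebra on `m` families of generators `x(k)^i_j`. -/
abbrev Fm (N m : ℕ) := FreeAlgebra ℂ (Fin m × Fin N × Fin N)

/-- The generator `x(k)^i_j` of the free algebra. -/
def gm {N m : ℕ} (k : Fin m) (i j : Fin N) : Fm N m := FreeAlgebra.ι ℂ (k, i, j)

/-- The defining relations of `A_q(N,m)`: each family `x(u)` satisfies the reflection equation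
relations, and each ordered pair `(x(u), x(v))` with `u < v` satisfies the cross relations
`x(v)^i_j·x(u)^k_l = Σ (R⁻¹)^{an}_{rc}·R^{sc}_{bl}·R^{id}_{am}·R̃^{bk}_{jd}·x(u)^m_n·x(v)^r_s`. -/
inductive RelM (q : ℂ) (N m : ℕ) : Fm N m → Fm N m → Prop
  | rea (u : Fin m) (i j k l : Fin N) : RelM q N m
      (∑ s : Fin N, ∑ t : Fin N, ∑ a : Fin N, ∑ b : Fin N,
        (Rh q i b s t * Rh q s a j l) • (gm u k b * gm u t a))
      (∑ s : Fin N, ∑ t : Fin N, ∑ a : Fin N, ∑ b : Fin N,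
        (Rh q i k s a * Rh q s t j b) • (gm u a t * gm u b l))
  | cross (u v : Fin m) (huv : u < v) (i j k l : Fin N) : RelM q N m
      (gm v i j * gm u k l)
      (∑ a : Fin N, ∑ b : Fin N, ∑ c : Fin N, ∑ d : Fin N, ∑ m' : Fin N, ∑ n : Fin N,
        ∑ r : Fin N, ∑ s : Fin N,
        ((RM q N)⁻¹ (a, n) (r, c) * RM q N (s, c) (b, l) * RM q N (i, d) (a, m') *
            Rtil q N (b, k) (j, d)) • (gm u m' n * gm v r s))

/-- The algebra `A_q(N,m)`. -/
abbrev Am (q : ℂ) (N m : ℕ) := RingQuot (RelM q N m)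

/-- The generator `x(k)^i_j` of `A_q(N,m)`. -/
def Xm (q : ℂ) {N m : ℕ} (k : Fin m) (i j : Fin N) : Am q N m :=
  RingQuot.mkAlgHom ℂ (RelM q N m) (gm k i j)

end QREA

namespace QREA

lemma Rh_sum (q : ℂ) {N : ℕ} (i k : Fin N) (f : Fin N → Fin N → ℂ) :
    ∑ a : Fin N, ∑ b : Fin N, Rh q i k a b * f a b
      = (if i = k then q else 1) * f k i + (if i < k then (q - q⁻¹) * f i k else 0) := by
  have h : ∀ a b : Fin N, Rh q i k a b * f a b =
      (if b = i then if a = k then (if i = k then q else 1) * f a b else 0 else 0)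
      + (if b = k then if a = i then (if i < k then (q - q⁻¹) * f a b else 0) else 0 else 0) := by
    intro a b
    unfold Rh Rc
    split_ifs <;> first | ring1 | (exfalso; omega)
  simp only [h, Finset.sum_add_distrib, Finset.sum_ite_eq', Finset.mem_univ, if_true]

/-- The R̂-matrix over ℂ. -/
def RHM (q : ℂ) (N : ℕ) : Matrix (Fin N × Fin N) (Fin N × Fin N) ℂ :=
  Matrix.of fun p r => Rh q p.1 p.2 r.1 r.2

/-- entrywise Hecke relation. -/
lemma hecke_entry (q : ℂ) (hq : q ≠ 0) {N : ℕ} (i k j l : Fin N) :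
    (if i = k then q else 1) * Rh q k i j l + (if i < k then (q - q⁻¹) * Rh q i k j l else 0)
      = (q - q⁻¹) * Rh q i k j l + (if i = j ∧ k = l then 1 else 0) := by
  have hq2 : q * q = (q - q⁻¹) * q + 1 := by field_simp; ring
  unfold Rh Rc
  split_ifs <;>
    first | ring1 | (exfalso; omega) | (exact hq2) | (linear_combination hq2) | (linear_combination (-1 : ℂ) * hq2)

/-- Hecke relation. -/
lemma hecke (q : ℂ) (hq : q ≠ 0) (N : ℕ) :
    RHM q N * RHM q N = (q - q⁻¹) • RHM q N + 1 := by
  ext p r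
  obtain ⟨i, k⟩ := p
  obtain ⟨j, l⟩ := r
  rw [Matrix.mul_apply, Fintype.sum_prod_type]
  simp only [RHM, Matrix.of_apply, Matrix.add_apply, Matrix.smul_apply, Matrix.one_apply,
    smul_eq_mul, Prod.mk.injEq]
  rw [Rh_sum q i k (fun a b => Rh q a b j l)]
  exact hecke_entry q hq i k j l

def RHI (q : ℂ) (N : ℕ) : Matrix (Fin N × Fin N) (Fin N × Fin N) ℂ :=
  RHM q N - (q - q⁻¹) • 1

lemma RHM_mul_RHI (q : ℂ) (hq : q ≠ 0) (N : ℕ) : RHM q N * RHI q N = 1 := by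
  unfold RHI
  rw [mul_sub, hecke q hq N, Matrix.mul_smul, mul_one]
  abel

lemma RHI_mul_RHM (q : ℂ) (hq : q ≠ 0) (N : ℕ) : RHI q N * RHM q N = 1 := by
  unfold RHI
  rw [sub_mul, hecke q hq N, Matrix.smul_mul, one_mul]
  abel

lemma RM_eq_RHM (q : ℂ) (N : ℕ) (p r : Fin N × Fin N) :
    RM q N p r = RHM q N (p.2, p.1) r := rfl

/-- explicit inverse of RM -/
lemma RM_inv_eq (q : ℂ) (hq : q ≠ 0) (N : ℕ) :
    (RM q N)⁻¹ = Matrix.of (fun p r : Fin N × Fin N => RHI q N p (r.2, r.1)) := by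
  apply Matrix.inv_eq_right_inv
  ext p r
  rw [Matrix.mul_apply]
  have key : ∀ t : Fin N × Fin N, RM q N p t * (Matrix.of (fun p r : Fin N × Fin N => RHI q N p (r.2, r.1))) t r
      = RHM q N (p.2, p.1) t * RHI q N t (r.2, r.1) := by
    intro t; rfl
  simp only [key]
  rw [← Matrix.mul_apply, RHM_mul_RHI q hq N, Matrix.one_apply, Matrix.one_apply]
  by_cases h : p = r
  · subst h; simp
  · rw [if_neg h, if_neg]
    intro hc
    exact h (Prod.ext (congrArg Prod.snd hc) (congrArg Prod.fst hc))

lemma t2_t2 {N : ℕ} (M : Matrix (Fin N × Fin N) (Fin N × Fin N) ℂ) : t2 (t2 M) = M := by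
  ext p r
  rfl

def eNN (N : ℕ) : Fin (N*N) ≃ Fin N × Fin N := (finProdFinEquiv : Fin N × Fin N ≃ Fin (N*N)).symm

/-- t2 (RM q N) is invertible -/
lemma t2RM_det_isUnit (q : ℂ) (hq : q ≠ 0) (N : ℕ) : IsUnit (t2 (RM q N)).det := by
  have henc : ∀ a : Fin (N * N), ((eNN N a).2 : ℕ) + N * ((eNN N a).1 : ℕ) = (a : ℕ) := by
    intro a
    have h1 : finProdFinEquiv (eNN N a) = a := Equiv.apply_symm_apply finProdFinEquiv a
    have := congrArg Fin.val h1
    simpa using this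
  have hdet : ((t2 (RM q N)).submatrix (eNN N) finProdFinEquiv.symm).det
      = (t2 (RM q N)).det :=
    Matrix.det_submatrix_equiv_self (eNN N) _
  rw [← hdet]
  have htri : ((t2 (RM q N)).submatrix (eNN N) finProdFinEquiv.symm).BlockTriangular OrderDual.toDual := by
    intro a b hab
    have hab' : (a : ℕ) < (b : ℕ) := hab
    show t2 (RM q N) (eNN N a) (eNN N b) = 0
    have ha := henc a
    have hb := henc b
    have hbd1 : ((eNN N a).2 : ℕ) < N := (eNN N a).2.isLt
    have hbd2 : ((eNN N b).2 : ℕ) < N := (eNN N b).2.isLt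
    show Rc q (eNN N a).1 (eNN N b).2 (eNN N b).1
      (eNN N a).2 = 0
    unfold Rc
    split_ifs with h1 h2 h3
    · exfalso
      obtain ⟨c1, c2, _⟩ := h1
      have : (eNN N a) = (eNN N b) := Prod.ext c1 c2.symm
      have : a = b := (eNN N).injective this
      omega
    · exfalso
      obtain ⟨c1, c2⟩ := h2
      have : (eNN N a) = (eNN N b) := Prod.ext c1 c2.symm
      have : a = b := (eNN N).injective this
      omega
    · exfalso
      obtain ⟨c1, c2, c3⟩ := h3
      have c1' : ((eNN N b).1 : ℕ) < ((eNN N a).1 : ℕ) := c1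
      have c2' : ((eNN N a).1 : ℕ) = ((eNN N a).2 : ℕ) := congrArg Fin.val c2
      have c3' : ((eNN N b).1 : ℕ) = ((eNN N b).2 : ℕ) := congrArg Fin.val c3
      have hba : (b : ℕ) < (a : ℕ) := by
        calc (b : ℕ) = ((eNN N b).2 : ℕ) + N * ((eNN N b).1 : ℕ) := hb.symm
        _ < N + N * ((eNN N b).1 : ℕ) := by omega
        _ = N * (((eNN N b).1 : ℕ) + 1) := by ring
        _ ≤ N * ((eNN N a).1 : ℕ) := Nat.mul_le_mul_left N (by omega)
        _ ≤ ((eNN N a).2 : ℕ) + N * ((eNN N a).1 : ℕ) := by omega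
        _ = (a : ℕ) := ha
      omega
    · rfl
  rw [Matrix.det_of_lowerTriangular _ htri]
  rw [isUnit_iff_ne_zero]
  rw [Finset.prod_ne_zero_iff]
  intro a _
  show Rc q (eNN N a).1 (eNN N a).2 (eNN N a).1
    (eNN N a).2 ≠ 0
  unfold Rc
  split_ifs <;> first | exact hq | exact one_ne_zero | (exfalso; omega)

lemma Rtil_mul (q : ℂ) (hq : q ≠ 0) (N : ℕ) : (t2 (RM q N))⁻¹ * t2 (RM q N) = 1 :=
  Matrix.nonsing_inv_mul _ (t2RM_det_isUnit q hq N)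

section pulls
variable {M : Type*} [AddCommMonoid M]
variable {α β γ δ ε ζ η θ : Type*} [Fintype α] [Fintype β] [Fintype γ] [Fintype δ]
  [Fintype ε] [Fintype ζ] [Fintype η] [Fintype θ]

lemma pull1 (f : α → β → M) : ∑ a, ∑ b, f a b = ∑ b, ∑ a, f a b := Finset.sum_comm

lemma pull2 (f : α → β → γ → M) :
    ∑ a, ∑ b, ∑ c, f a b c = ∑ b, ∑ c, ∑ a, f a b c :=
  Finset.sum_comm.trans (Finset.sum_congr rfl fun _ _ => Finset.sum_comm)

lemma pull3 (f : α → β → γ → δ → M) :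
    ∑ a, ∑ b, ∑ c, ∑ d, f a b c d = ∑ b, ∑ c, ∑ d, ∑ a, f a b c d :=
  Finset.sum_comm.trans (Finset.sum_congr rfl fun _ _ => pull2 _)

lemma pull4 (f : α → β → γ → δ → ε → M) :
    ∑ a, ∑ b, ∑ c, ∑ d, ∑ e, f a b c d e = ∑ b, ∑ c, ∑ d, ∑ e, ∑ a, f a b c d e :=
  Finset.sum_comm.trans (Finset.sum_congr rfl fun _ _ => pull3 _)

lemma pull5 (f : α → β → γ → δ → ε → ζ → M) :
    ∑ a, ∑ b, ∑ c, ∑ d, ∑ e, ∑ x, f a b c d e x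
      = ∑ b, ∑ c, ∑ d, ∑ e, ∑ x, ∑ a, f a b c d e x :=
  Finset.sum_comm.trans (Finset.sum_congr rfl fun _ _ => pull4 _)

lemma pull6 (f : α → β → γ → δ → ε → ζ → η → M) :
    ∑ a, ∑ b, ∑ c, ∑ d, ∑ e, ∑ x, ∑ y, f a b c d e x y
      = ∑ b, ∑ c, ∑ d, ∑ e, ∑ x, ∑ y, ∑ a, f a b c d e x y :=
  Finset.sum_comm.trans (Finset.sum_congr rfl fun _ _ => pull5 _)

lemma pull7 (f : α → β → γ → δ → ε → ζ → η → θ → M) :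
    ∑ a, ∑ b, ∑ c, ∑ d, ∑ e, ∑ x, ∑ y, ∑ z, f a b c d e x y z
      = ∑ b, ∑ c, ∑ d, ∑ e, ∑ x, ∑ y, ∑ z, ∑ a, f a b c d e x y z :=
  Finset.sum_comm.trans (Finset.sum_congr rfl fun _ _ => pull6 _)


lemma pull8 {ι1 ι2 ι3 ι4 ι5 ι6 ι7 ι8 ι9 : Type*} [Fintype ι1] [Fintype ι2] [Fintype ι3]
    [Fintype ι4] [Fintype ι5] [Fintype ι6] [Fintype ι7] [Fintype ι8] [Fintype ι9]
    (f : ι1 → ι2 → ι3 → ι4 → ι5 → ι6 → ι7 → ι8 → ι9 → M) :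
    ∑ a, ∑ b, ∑ c, ∑ d, ∑ e, ∑ x, ∑ y, ∑ z, ∑ u, f a b c d e x y z u
      = ∑ b, ∑ c, ∑ d, ∑ e, ∑ x, ∑ y, ∑ z, ∑ u, ∑ a, f a b c d e x y z u := by
  refine Finset.sum_comm.trans (Finset.sum_congr rfl fun _ _ => ?_)
  exact pull7 _

lemma pull9 {ι0 ι1 ι2 ι3 ι4 ι5 ι6 ι7 ι8 ι9 : Type*} [Fintype ι0] [Fintype ι1] [Fintype ι2]
    [Fintype ι3] [Fintype ι4] [Fintype ι5] [Fintype ι6] [Fintype ι7] [Fintype ι8] [Fintype ι9]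
    (f : ι0 → ι1 → ι2 → ι3 → ι4 → ι5 → ι6 → ι7 → ι8 → ι9 → M) :
    ∑ a, ∑ b, ∑ c, ∑ d, ∑ e, ∑ x, ∑ y, ∑ z, ∑ u, ∑ w, f a b c d e x y z u w
      = ∑ b, ∑ c, ∑ d, ∑ e, ∑ x, ∑ y, ∑ z, ∑ u, ∑ w, ∑ a, f a b c d e x y z u w := by
  refine Finset.sum_comm.trans (Finset.sum_congr rfl fun _ _ => ?_)
  exact pull8 _

end pulls

lemma sum_if_const {M : Type*} [AddCommMonoid M] {ι : Type*} (P : Prop) [Decidable P]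
    (s : Finset ι) (f : ι → M) :
    (∑ x ∈ s, if P then f x else 0) = if P then ∑ x ∈ s, f x else 0 := by
  split_ifs <;> simp

/-- The key scalar identity. -/
lemma star_id (q : ℂ) (hq : q ≠ 0) {N : ℕ} (i j k l m n r s : Fin N) :
    ∑ b : Fin N, ∑ t : Fin N, Rh q i b j t *
        (∑ a : Fin N, ∑ b' : Fin N, ∑ c : Fin N, ∑ d : Fin N,
          (RM q N)⁻¹ (a, n) (r, c) * RM q N (s, c) (b', l) * RM q N (k, d) (a, m)
            * Rtil q N (b', t) (b, d))
      = ∑ a : Fin N, ∑ c : Fin N, Rh q i k a m * RHI q N (a, n) (c, r) * Rh q c s j l := by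
  have hpt : ∀ b t a b' c d : Fin N,
      Rh q i b j t * ((RM q N)⁻¹ (a, n) (r, c) * RM q N (s, c) (b', l) * RM q N (k, d) (a, m)
        * Rtil q N (b', t) (b, d))
      = ((RM q N)⁻¹ (a, n) (r, c) * RM q N (s, c) (b', l) * RM q N (k, d) (a, m))
        * ((t2 (RM q N))⁻¹ (b', d) (b, t) * t2 (RM q N) (b, t) (j, i)) := by
    intro b t a b' c d
    have e1 : t2 (RM q N) (b, t) (j, i) = Rh q i b j t := rfl
    have e2 : Rtil q N (b', t) (b, d) = (t2 (RM q N))⁻¹ (b', d) (b, t) := rfl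
    rw [e1, e2]
    ring1
  simp only [Finset.mul_sum]
  simp only [hpt]
  rw [pull5]
  rw [pull5]
  have hinner : ∀ a b' c d : Fin N,
      (∑ b : Fin N, ∑ t : Fin N,
        ((RM q N)⁻¹ (a, n) (r, c) * RM q N (s, c) (b', l) * RM q N (k, d) (a, m))
          * ((t2 (RM q N))⁻¹ (b', d) (b, t) * t2 (RM q N) (b, t) (j, i)))
      = ((RM q N)⁻¹ (a, n) (r, c) * RM q N (s, c) (b', l) * RM q N (k, d) (a, m))
          * (if (b', d) = ((j : Fin N), (i : Fin N)) then 1 else 0) := by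
    intro a b' c d
    simp only [← Finset.mul_sum]
    congr 1
    have : (∑ b : Fin N, ∑ t : Fin N, (t2 (RM q N))⁻¹ (b', d) (b, t) * t2 (RM q N) (b, t) (j, i))
        = ((t2 (RM q N))⁻¹ * t2 (RM q N)) (b', d) (j, i) := by
      rw [Matrix.mul_apply, Fintype.sum_prod_type]
    rw [this, Rtil_mul q hq N, Matrix.one_apply]
  simp only [hinner]
  simp only [Prod.mk.injEq, mul_ite, mul_one, mul_zero, ite_and, sum_if_const,
    Finset.sum_ite_eq', Finset.mem_univ, if_true]
  refine Finset.sum_congr rfl fun a _ => Finset.sum_congr rfl fun c _ => ?_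
  rw [RM_inv_eq q hq N]
  have e3 : RM q N (s, c) (j, l) = Rh q c s j l := rfl
  have e4 : RM q N (k, i) (a, m) = Rh q i k a m := rfl
  have e5 : (Matrix.of (fun p r : Fin N × Fin N => RHI q N p (r.2, r.1))) (a, n) (r, c)
      = RHI q N (a, n) (c, r) := rfl
  rw [e3, e4, e5]
  ring1

section Algebra
variable (q : ℂ) (N : ℕ)

/-- scalar matrix lifted to `Am q N 2`. -/
def liftM (A : Matrix (Fin N × Fin N) (Fin N × Fin N) ℂ) :
    Matrix (Fin N × Fin N) (Fin N × Fin N) (Am q N 2) :=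
  A.map (algebraMap ℂ (Am q N 2))

lemma liftM_mul (A B : Matrix (Fin N × Fin N) (Fin N × Fin N) ℂ) :
    liftM q N (A * B) = liftM q N A * liftM q N B :=
  map_mul ((algebraMap ℂ (Am q N 2)).mapMatrix) A B

lemma liftM_one : liftM q N 1 = 1 :=
  map_one ((algebraMap ℂ (Am q N 2)).mapMatrix)

/-- a family of algebra elements placed in the second tensor leg. -/
def leg2 (w : Fin N → Fin N → Am q N 2) :
    Matrix (Fin N × Fin N) (Fin N × Fin N) (Am q N 2) :=
  Matrix.of fun p r => if p.1 = r.1 then w p.2 r.2 else 0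

lemma mul_leg2_apply (M : Matrix (Fin N × Fin N) (Fin N × Fin N) (Am q N 2))
    (w : Fin N → Fin N → Am q N 2) (p r : Fin N × Fin N) :
    (M * leg2 q N w) p r = ∑ t : Fin N, M p (r.1, t) * w t r.2 := by
  rw [Matrix.mul_apply, Fintype.sum_prod_type]
  simp only [leg2, Matrix.of_apply, mul_ite, mul_zero, sum_if_const,
    Finset.sum_ite_eq', Finset.mem_univ, if_true]

lemma leg2_mul_lift_apply (w : Fin N → Fin N → Am q N 2)
    (A : Matrix (Fin N × Fin N) (Fin N × Fin N) ℂ) (p r : Fin N × Fin N) :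
    (leg2 q N w * liftM q N A) p r
      = ∑ b : Fin N, w p.2 b * algebraMap ℂ (Am q N 2) (A (p.1, b) r) := by
  rw [Matrix.mul_apply, Fintype.sum_prod_type]
  simp only [leg2, liftM, Matrix.of_apply, Matrix.map_apply, ite_mul, zero_mul, sum_if_const,
    Finset.sum_ite_eq, Finset.mem_univ, if_true]

lemma leg2_mul_leg2 (w v : Fin N → Fin N → Am q N 2) :
    leg2 q N w * leg2 q N v = leg2 q N (fun i j => ∑ s : Fin N, w i s * v s j) := by
  ext p r
  rw [mul_leg2_apply]
  simp only [leg2, Matrix.of_apply, ite_mul, zero_mul, sum_if_const]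

lemma lift_apply (A : Matrix (Fin N × Fin N) (Fin N × Fin N) ℂ) (p r : Fin N × Fin N) :
    liftM q N A p r = algebraMap ℂ (Am q N 2) (A p r) := rfl

-- scalar rearrangement helpers
lemma hsmul1 (c : ℂ) (u v : Am q N 2) :
    (u * algebraMap ℂ (Am q N 2) c) * v = c • (u * v) := by
  rw [← Algebra.commutes c u, ← Algebra.smul_def, smul_mul_assoc]

lemma hsmul2a (c d : ℂ) (u v : Am q N 2) :
    ((u * algebraMap ℂ (Am q N 2) c) * v) * algebraMap ℂ (Am q N 2) d = (c * d) • (u * v) := by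
  rw [hsmul1, smul_mul_assoc, ← Algebra.commutes d (u * v), ← Algebra.smul_def, smul_smul]

lemma hsmul2b (c d : ℂ) (u v : Am q N 2) :
    ((algebraMap ℂ (Am q N 2) c * u) * algebraMap ℂ (Am q N 2) d) * v = (c * d) • (u * v) := by
  rw [← Algebra.smul_def, smul_mul_assoc, smul_mul_assoc, ← Algebra.commutes d u,
    ← Algebra.smul_def, smul_mul_assoc, smul_smul]

lemma hsmul3 (c d e : ℂ) (u v : Am q N 2) :
    (((algebraMap ℂ (Am q N 2) c * u) * algebraMap ℂ (Am q N 2) d) * v)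
        * algebraMap ℂ (Am q N 2) e = (c * d * e) • (u * v) := by
  rw [hsmul2b, smul_mul_assoc, ← Algebra.commutes e (u * v), ← Algebra.smul_def, smul_smul]


lemma RHM_pair (a b c d : Fin N) : RHM q N (a, b) (c, d) = Rh q a b c d := rfl

lemma bridgeL (w v : Fin N → Fin N → Am q N 2) (i k j l : Fin N) :
    (leg2 q N w * liftM q N (RHM q N) * leg2 q N v * liftM q N (RHM q N)) (i, k) (j, l)
      = ∑ s : Fin N, ∑ t : Fin N, ∑ a : Fin N, ∑ b : Fin N,
          (Rh q i b s t * Rh q s a j l) • (w k b * v t a) := by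
  rw [Matrix.mul_apply, Fintype.sum_prod_type]
  simp only [mul_leg2_apply, leg2_mul_lift_apply, lift_apply]
  simp only [Finset.sum_mul]
  refine Finset.sum_congr rfl fun s _ => ?_
  rw [Finset.sum_comm]
  refine Finset.sum_congr rfl fun t _ => Finset.sum_congr rfl fun a _ =>
    Finset.sum_congr rfl fun b _ => ?_
  simp only [RHM_pair]
  exact hsmul2a q N _ _ _ _

lemma bridgeR (w v : Fin N → Fin N → Am q N 2) (i k j l : Fin N) :
    (liftM q N (RHM q N) * leg2 q N w * liftM q N (RHM q N) * leg2 q N v) (i, k) (j, l)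
      = ∑ s : Fin N, ∑ t : Fin N, ∑ a : Fin N, ∑ b : Fin N,
          (Rh q i k s a * Rh q s t j b) • (w a t * v b l) := by
  rw [mul_leg2_apply]
  have h1 : ∀ b : Fin N,
      (liftM q N (RHM q N) * leg2 q N w * liftM q N (RHM q N)) (i, k) (j, b)
        = ∑ s : Fin N, ∑ t : Fin N, ∑ a : Fin N,
            ((algebraMap ℂ (Am q N 2) (Rh q i k s a) * w a t)
              * algebraMap ℂ (Am q N 2) (Rh q s t j b)) := by
    intro b
    rw [Matrix.mul_apply, Fintype.sum_prod_type]
    simp only [mul_leg2_apply, lift_apply, RHM_pair]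
    simp only [Finset.sum_mul]
  simp only [h1, Finset.sum_mul]
  rw [pull3]
  refine Finset.sum_congr rfl fun s _ => Finset.sum_congr rfl fun t _ =>
    Finset.sum_congr rfl fun a _ => Finset.sum_congr rfl fun b _ => ?_
  exact hsmul2b q N _ _ _ _

lemma bridgeC1 (w v : Fin N → Fin N → Am q N 2) (i k j l : Fin N) :
    (leg2 q N w * liftM q N (RHM q N) * leg2 q N v) (i, k) (j, l)
      = ∑ b : Fin N, ∑ t : Fin N, (Rh q i b j t) • (w k b * v t l) := by
  rw [mul_leg2_apply]
  simp only [leg2_mul_lift_apply, RHM_pair]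
  simp only [Finset.sum_mul]
  rw [pull1]
  refine Finset.sum_congr rfl fun b _ => Finset.sum_congr rfl fun t _ => ?_
  exact hsmul1 q N _ _ _

lemma bridgeC2 (w v : Fin N → Fin N → Am q N 2) (i k j l : Fin N) :
    (liftM q N (RHM q N) * leg2 q N w * liftM q N (RHI q N) * leg2 q N v
        * liftM q N (RHM q N)) (i, k) (j, l)
      = ∑ m : Fin N, ∑ n : Fin N, ∑ r : Fin N, ∑ s : Fin N,
          (∑ a : Fin N, ∑ c : Fin N,
            Rh q i k a m * RHI q N (a, n) (c, r) * Rh q c s j l) • (w m n * v r s) := by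
  have hA : ∀ p2 : Fin N × Fin N, (liftM q N (RHM q N) * leg2 q N w) (i, k) p2
      = ∑ m : Fin N, algebraMap ℂ (Am q N 2) (Rh q i k p2.1 m) * w m p2.2 := by
    intro p2
    rw [mul_leg2_apply]
    simp only [lift_apply, RHM_pair]
  have hB : ∀ p3 : Fin N × Fin N,
      (liftM q N (RHM q N) * leg2 q N w * liftM q N (RHI q N)) (i, k) p3
      = ∑ a : Fin N, ∑ n : Fin N, ∑ m : Fin N,
          ((algebraMap ℂ (Am q N 2) (Rh q i k a m) * w m n)
            * algebraMap ℂ (Am q N 2) (RHI q N (a, n) p3)) := by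
    intro p3
    rw [Matrix.mul_apply, Fintype.sum_prod_type]
    simp only [hA, lift_apply]
    simp only [Finset.sum_mul]
  have hC : ∀ p4 : Fin N × Fin N,
      (liftM q N (RHM q N) * leg2 q N w * liftM q N (RHI q N) * leg2 q N v) (i, k) p4
      = ∑ r : Fin N, ∑ a : Fin N, ∑ n : Fin N, ∑ m : Fin N,
          (((algebraMap ℂ (Am q N 2) (Rh q i k a m) * w m n)
            * algebraMap ℂ (Am q N 2) (RHI q N (a, n) (p4.1, r))) * v r p4.2) := by
    intro p4
    rw [mul_leg2_apply]
    simp only [hB]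
    simp only [Finset.sum_mul]
  rw [Matrix.mul_apply, Fintype.sum_prod_type]
  simp only [hC, lift_apply, RHM_pair]
  simp only [Finset.sum_mul]
  simp only [hsmul3]
  rw [pull5, pull5, pull5, pull2, pull1]
  refine Finset.sum_congr rfl fun m _ => Finset.sum_congr rfl fun n _ => ?_
  rw [pull3, pull2, pull1]
  refine Finset.sum_congr rfl fun r _ => Finset.sum_congr rfl fun s' _ => ?_
  rw [pull1]
  simp only [Finset.sum_smul]


section Relations
variable (q : ℂ) (N : ℕ)

lemma Xm_def {m : ℕ} (u : Fin m) (i j : Fin N) :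
    RingQuot.mkAlgHom ℂ (RelM q N m) (gm u i j) = Xm q u i j := rfl

lemma hrea (u : Fin 2) (i j k l : Fin N) :
    ∑ s : Fin N, ∑ t : Fin N, ∑ a : Fin N, ∑ b : Fin N,
        (Rh q i b s t * Rh q s a j l) • (Xm q u k b * Xm q u t a)
      = ∑ s : Fin N, ∑ t : Fin N, ∑ a : Fin N, ∑ b : Fin N,
        (Rh q i k s a * Rh q s t j b) • (Xm q u a t * Xm q u b l) := by
  have h := RingQuot.mkAlgHom_rel ℂ (RelM.rea (q := q) (N := N) (m := 2) u i j k l)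
  simp only [map_sum, map_smul, map_mul, Xm_def] at h
  exact h

lemma hcross (i j k l : Fin N) :
    Xm q (1 : Fin 2) i j * Xm q (0 : Fin 2) k l
      = ∑ a : Fin N, ∑ b : Fin N, ∑ c : Fin N, ∑ d : Fin N, ∑ m' : Fin N, ∑ n : Fin N,
        ∑ r : Fin N, ∑ s : Fin N,
        ((RM q N)⁻¹ (a, n) (r, c) * RM q N (s, c) (b, l) * RM q N (i, d) (a, m') *
            Rtil q N (b, k) (j, d)) • (Xm q (0 : Fin 2) m' n * Xm q (1 : Fin 2) r s) := by
  have h := RingQuot.mkAlgHom_rel ℂ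
    (RelM.cross (q := q) (N := N) (m := 2) 0 1 (by decide) i j k l)
  simp only [map_sum, map_smul, map_mul, Xm_def] at h
  exact h

lemma MArel (u : Fin 2) :
    leg2 q N (Xm q u) * liftM q N (RHM q N) * leg2 q N (Xm q u) * liftM q N (RHM q N)
      = liftM q N (RHM q N) * leg2 q N (Xm q u) * liftM q N (RHM q N) * leg2 q N (Xm q u) := by
  ext p r
  obtain ⟨i, k⟩ := p
  obtain ⟨j, l⟩ := r
  rw [bridgeL, bridgeR]
  exact hrea q N u i j k l

set_option maxHeartbeats 2000000 in
lemma MCrel (hq : q ≠ 0) :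
    leg2 q N (Xm q 1) * liftM q N (RHM q N) * leg2 q N (Xm q 0)
      = liftM q N (RHM q N) * leg2 q N (Xm q 0) * liftM q N (RHI q N) * leg2 q N (Xm q 1)
          * liftM q N (RHM q N) := by
  ext p r
  obtain ⟨i, k⟩ := p
  obtain ⟨j, l⟩ := r
  rw [bridgeC1, bridgeC2]
  simp only [hcross q N]
  simp only [Finset.smul_sum, smul_smul]
  rw [pull9, pull9, pull9, pull9, pull9, pull9]
  simp only [← Finset.sum_smul]
  refine Finset.sum_congr rfl fun m _ => Finset.sum_congr rfl fun n _ =>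
    Finset.sum_congr rfl fun r' _ => Finset.sum_congr rfl fun s' _ => ?_
  congr 1
  rw [← star_id q hq i j k l m n r' s']
  simp only [Finset.mul_sum]

end Relations

end Algebra

/-- the matrix product entries -/
def zf (q : ℂ) (N : ℕ) : Fin N → Fin N → Am q N 2 :=
  fun i j => ∑ s : Fin N, Xm q (0 : Fin 2) i s * Xm q (1 : Fin 2) s j

lemma X_def (q : ℂ) {N : ℕ} (i j : Fin N) :
    X q i j = RingQuot.mkAlgHom ℂ (Rel q N) (g i j) := rfl
end QREA


/-- there is a ℂ-algebra homomorphism `A_q(N) → A_q(N,2)` sending `x^i_j` to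
`Σ_s x^i_s·y^s_j`, i.e. the entries of the matrix `XY` satisfy the reflection equation
relations. -/
theorem exists_algHom_rea_to_rea_two (q : ℂ) (hq : q ≠ 0) (N : ℕ) (hN : 2 ≤ N) :
    ∃ φ : QREA.A q N →ₐ[ℂ] QREA.Am q N 2, ∀ i j : Fin N,
      φ (QREA.X q i j) = ∑ s : Fin N, QREA.Xm q (0 : Fin 2) i s * QREA.Xm q (1 : Fin 2) s j := by
  classical
  open QREA in
  -- matrix abbreviations
  have hXY : leg2 q N (Xm q (0 : Fin 2)) * leg2 q N (Xm q (1 : Fin 2)) = leg2 q N (zf q N) :=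
    leg2_mul_leg2 q N _ _
  have hRR' : ∀ T : Matrix (Fin N × Fin N) (Fin N × Fin N) (Am q N 2),
      liftM q N (RHM q N) * (liftM q N (RHI q N) * T) = T := by
    intro T
    rw [← mul_assoc, ← liftM_mul, RHM_mul_RHI q hq, liftM_one, one_mul]
  have hR'R : ∀ T : Matrix (Fin N × Fin N) (Fin N × Fin N) (Am q N 2),
      liftM q N (RHI q N) * (liftM q N (RHM q N) * T) = T := by
    intro T
    rw [← mul_assoc, ← liftM_mul, RHI_mul_RHM q hq, liftM_one, one_mul]
  have hMC' : ∀ T : Matrix (Fin N × Fin N) (Fin N × Fin N) (Am q N 2),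
      leg2 q N (Xm q (1 : Fin 2)) * (liftM q N (RHM q N) * (leg2 q N (Xm q (0 : Fin 2)) * T))
        = liftM q N (RHM q N) * (leg2 q N (Xm q (0 : Fin 2)) * (liftM q N (RHI q N)
            * (leg2 q N (Xm q (1 : Fin 2)) * (liftM q N (RHM q N) * T)))) := by
    intro T
    have := congrArg (· * T) (MCrel q N hq)
    simpa [mul_assoc] using this
  have hMB : leg2 q N (Xm q (1 : Fin 2)) * (liftM q N (RHM q N)
        * (leg2 q N (Xm q (1 : Fin 2)) * liftM q N (RHM q N)))
      = liftM q N (RHM q N) * (leg2 q N (Xm q (1 : Fin 2))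
        * (liftM q N (RHM q N) * leg2 q N (Xm q (1 : Fin 2)))) := by
    have := MArel q N 1
    simpa [mul_assoc] using this
  have hMA' : ∀ T : Matrix (Fin N × Fin N) (Fin N × Fin N) (Am q N 2),
      liftM q N (RHM q N) * (leg2 q N (Xm q (0 : Fin 2)) * (liftM q N (RHM q N)
          * (leg2 q N (Xm q (0 : Fin 2)) * T)))
        = leg2 q N (Xm q (0 : Fin 2)) * (liftM q N (RHM q N) * (leg2 q N (Xm q (0 : Fin 2))
          * (liftM q N (RHM q N) * T))) := by
    intro T
    have := congrArg (· * T) (MArel q N 0).symm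
    simpa [mul_assoc] using this
  have hMZ : leg2 q N (zf q N) * liftM q N (RHM q N) * leg2 q N (zf q N) * liftM q N (RHM q N)
      = liftM q N (RHM q N) * leg2 q N (zf q N) * liftM q N (RHM q N) * leg2 q N (zf q N) := by
    rw [← hXY]
    simp only [mul_assoc]
    conv_lhs => rw [hMC', hMB, hR'R]
    conv_rhs => rw [hMC', hMA', hRR']
  have hpres : ∀ ⦃a b : F N⦄, Rel q N a b →
      (FreeAlgebra.lift ℂ (fun p : Fin N × Fin N => zf q N p.1 p.2)) a
        = (FreeAlgebra.lift ℂ (fun p : Fin N × Fin N => zf q N p.1 p.2)) b := by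
    intro a b hab
    cases hab with
    | rea i j k l =>
      simp only [map_sum, map_smul, map_mul, g, FreeAlgebra.lift_ι_apply]
      have e1 := bridgeL q N (zf q N) (zf q N) i k j l
      have e2 := bridgeR q N (zf q N) (zf q N) i k j l
      rw [hMZ] at e1
      exact e1.symm.trans e2
  refine ⟨RingQuot.liftAlgHom ℂ ⟨_, hpres⟩, fun i j => ?_⟩
  rw [X_def, RingQuot.liftAlgHom_mkAlgHom_apply]
  have hg : g (N := N) i j = FreeAlgebra.ι ℂ (i, j) := rfl
  rw [hg, FreeAlgebra.lift_ι_apply]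
  rfl
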